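/- arXiv:2008.10180 — 3 statements merged into one kernel-verified Lean document; each statement's English description precedes it below -/
import Mathlib

section
/- Let Z ⊆ ℝ^d be a nonempty compact set, f : ℝ^d → ℝ^n a continuous map, X := f(Z), and let (z^j)_{j≥1} be an i.i.d. sequence on a probability space (Ω, 𝒜, ℙ) with common law μ, where μ is a Borel probability measure on ℝ^d with μ(Z) = 1 and μ(f⁻¹(G)) > 0 for every open set G ⊆ ℝ^n with G ∩ X ≠ ∅. For each m ≥ 1 define the random convex hull 𝒳^m(ω) := convexHull{f(z^1(ω)), …, f(z^m(ω))}. Then there is an event of probability one on which the closure of ⋃_{m≥1} 𝒳^m(ω) equals the convex hull convexHull(X) of the reachable set; in particular, the sampled convex hulls converge to convexHull(X) as m → ∞ almost surely. -/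
open MeasureTheory Set

/-- The convex hull of a compact set in `ℝⁿ` is compact (Carathéodory). -/
lemma isCompact_convexHull_fin {n : ℕ} {X : Set (Fin n → ℝ)} (hXc : IsCompact X) :
    IsCompact (convexHull ℝ X) := by
  rcases X.eq_empty_or_nonempty with rfl | ⟨x0, hx0⟩
  · simpa using isCompact_empty
  set N := n + 1 with hN
  set g : (Fin N → ℝ) × (Fin N → (Fin n → ℝ)) → (Fin n → ℝ) :=
    fun p => ∑ i, p.1 i • p.2 i with hgdef
  have hgc : Continuous g := by
    apply continuous_finset_sum
    intro i _
    exact (continuous_apply i |>.comp continuous_fst).smul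
      ((continuous_apply i).comp continuous_snd)
  have hK : IsCompact ((stdSimplex ℝ (Fin N)) ×ˢ (Set.univ.pi fun _ : Fin N => X)) :=
    IsCompact.prod (isCompact_stdSimplex ℝ (Fin N)) (isCompact_univ_pi fun _ => hXc)
  have himg : g '' ((stdSimplex ℝ (Fin N)) ×ˢ (Set.univ.pi fun _ : Fin N => X))
      = convexHull ℝ X := by
    apply Subset.antisymm
    · rintro _ ⟨⟨w, v⟩, ⟨hw, hv⟩, rfl⟩
      exact (convex_convexHull ℝ X).sum_mem (fun i _ => hw.1 i) hw.2
        (fun i _ => subset_convexHull ℝ X (hv i (mem_univ i)))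
    · intro x hx
      rw [convexHull_eq_union] at hx
      simp only [mem_iUnion] at hx
      obtain ⟨t, hts, hai, hxt⟩ := hx
      have hcard : t.card ≤ N := by
        calc t.card = Fintype.card ↑t := (Fintype.card_coe t).symm
          _ ≤ Module.finrank ℝ (vectorSpan ℝ (Set.range ((↑) : ↑t → (Fin n → ℝ)))) + 1 :=
              hai.card_le_finrank_succ
          _ ≤ Module.finrank ℝ (Fin n → ℝ) + 1 :=
              Nat.add_le_add_right (Submodule.finrank_le _) 1
          _ = N := by simp [hN]
      rw [Finset.convexHull_eq] at hxt
      obtain ⟨w, hw0, hw1, hwx⟩ := hxt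
      rw [Finset.centerMass_eq_of_sum_1 _ _ hw1] at hwx
      have hcard' : Fintype.card ↑t ≤ Fintype.card (Fin N) := by
        simpa [Fintype.card_coe] using hcard
      obtain ⟨e⟩ := Function.Embedding.nonempty_of_card_le hcard'
      set w' : Fin N → ℝ := Function.extend e (fun y => w y) 0 with hw'def
      set v : Fin N → (Fin n → ℝ) := Function.extend e (fun y => (y : Fin n → ℝ))
        (fun _ => x0) with hvdef
      have key : ∀ {M : Type} [AddCommMonoid M] (F : Fin N → M) (φ : ↑t → M),
          (∀ y : ↑t, F (e y) = φ y) → (∀ j, (¬ ∃ y, e y = j) → F j = 0) →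
          ∑ j, F j = ∑ y, φ y := by
        intro M _ F φ hFe hF0
        rw [show (∑ j, F j) = ∑ j ∈ Finset.univ.image e, F j by
          refine (Finset.sum_subset (Finset.subset_univ _) fun j _ hj => hF0 j ?_).symm
          simpa [Finset.mem_image] using hj]
        rw [Finset.sum_image (fun a _ b _ h => e.injective h)]
        exact Finset.sum_congr rfl fun y _ => hFe y
      have hsmul : ∀ y : ↑t, w' (e y) • v (e y) = w y • (y : Fin n → ℝ) := by
        intro y
        rw [hw'def, hvdef, e.injective.extend_apply, e.injective.extend_apply]
      refine ⟨(w', v), ⟨⟨?_, ?_⟩, ?_⟩, ?_⟩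
      · intro j
        show 0 ≤ Function.extend (⇑e) (fun y => w ↑y) 0 j
        by_cases h : ∃ y, e y = j
        · obtain ⟨y, rfl⟩ := h
          rw [e.injective.extend_apply]
          exact hw0 y y.2
        · rw [Function.extend_apply' _ _ _ h]
          exact le_refl 0
      · rw [key w' (fun y => w y) (fun y => by rw [hw'def, e.injective.extend_apply])
          (fun j hj => by rw [hw'def, Function.extend_apply' _ _ _ hj]; rfl)]
        rw [← hw1]
        exact Finset.sum_attach t w
      · intro j _
        show Function.extend (⇑e) (fun y => (y : Fin n → ℝ)) (fun _ => x0) j ∈ X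
        by_cases h : ∃ y, e y = j
        · obtain ⟨y, rfl⟩ := h
          rw [e.injective.extend_apply]
          exact hts y.2
        · rw [Function.extend_apply' _ _ _ h]
          exact hx0
      · show ∑ j, w' j • v j = x
        rw [key (fun j => w' j • v j) (fun y => w y • (y : Fin n → ℝ)) hsmul
          (fun j hj => by
            show Function.extend (⇑e) (fun y => w ↑y) 0 j • v j = 0
            rw [Function.extend_apply' _ _ _ hj]
            show (0 : ℝ) • v j = 0
            rw [zero_smul])]
        rw [← hwx]
        exact Finset.sum_attach t fun y => w y • id y
  rw [← himg]
  exact hK.image hgc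

lemma iIndepSet_preimage {Ω : Type*} [MeasurableSpace Ω] (ℙ : Measure Ω)
    {d : ℕ} (z : ℕ → Ω → (Fin d → ℝ))
    (hindep : ProbabilityTheory.iIndepFun z ℙ)
    {E : Set (Fin d → ℝ)} (hE : MeasurableSet E) :
    ProbabilityTheory.iIndepSet (fun j => z j ⁻¹' E) ℙ := by
  rw [ProbabilityTheory.iIndepSet_iff_iIndep]
  have h := hindep.iIndep
  rw [ProbabilityTheory.iIndep_iff] at h ⊢
  intro s g hg
  refine h s (fun i hi => ?_)
  have hle : MeasurableSpace.generateFrom {z i ⁻¹' E} ≤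
      MeasurableSpace.comap (z i) inferInstance := by
    refine MeasurableSpace.generateFrom_le ?_
    rintro u hu
    rw [Set.mem_singleton_iff] at hu
    subst hu
    exact ⟨E, hE, rfl⟩
  exact hle _ (hg i hi)

/-- Theorem 2 of the paper (convergence of random convex hulls produced by randUP):
the closure of the union of the sampled convex hulls almost surely equals the
convex hull of the reachable set `X = f '' Z`. -/
theorem randUP_convergence
    {d n : ℕ}
    (Z : Set (Fin d → ℝ)) (hZne : Z.Nonempty) (hZc : IsCompact Z)
    (f : (Fin d → ℝ) → (Fin n → ℝ)) (hf : Continuous f)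
    (X : Set (Fin n → ℝ)) (hX : X = f '' Z)
    {Ω : Type*} [MeasurableSpace Ω] (ℙ : Measure Ω) [IsProbabilityMeasure ℙ]
    (μ : Measure (Fin d → ℝ)) [IsProbabilityMeasure μ]
    (z : ℕ → Ω → (Fin d → ℝ))
    (hmeas : ∀ j, Measurable (z j))
    (hindep : ProbabilityTheory.iIndepFun z ℙ)
    (hlaw : ∀ j, Measure.map (z j) ℙ = μ)
    (hμZ : μ Z = 1)
    (hμG : ∀ G : Set (Fin n → ℝ), IsOpen G → (G ∩ X).Nonempty → 0 < μ (f ⁻¹' G)) :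
    ∃ A : Set Ω, MeasurableSet A ∧ ℙ A = 1 ∧
      ∀ ω ∈ A,
        closure (⋃ m : ℕ, convexHull ℝ ((fun j => f (z j ω)) '' Set.Iic m)) =
          convexHull ℝ X := by
  classical
  have hXc : IsCompact X := hX ▸ hZc.image hf
  have hconvclosed : IsClosed (convexHull ℝ X) := (isCompact_convexHull_fin hXc).isClosed
  set S : Set (Set (Fin n → ℝ)) :=
    {G | G ∈ TopologicalSpace.countableBasis (Fin n → ℝ) ∧ (G ∩ X).Nonempty} with hSdef
  have hScount : S.Countable :=
    (TopologicalSpace.countable_countableBasis _).mono fun G hG => hG.1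
  have hSopen : ∀ G ∈ S, IsOpen G := fun G hG =>
    (TopologicalSpace.isBasis_countableBasis _).isOpen hG.1
  have hZm : MeasurableSet Z := hZc.isClosed.measurableSet
  set A : Set Ω :=
    (⋂ j, z j ⁻¹' Z) ∩ ⋂ G ∈ S, ⋃ j, z j ⁻¹' (f ⁻¹' G) with hAdef
  have hGm : ∀ G ∈ S, MeasurableSet (f ⁻¹' G) := fun G hG =>
    hf.measurable (hSopen G hG).measurableSet
  have hAm : MeasurableSet A := by
    refine MeasurableSet.inter (MeasurableSet.iInter fun j => (hmeas j) hZm) ?_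
    exact MeasurableSet.biInter hScount fun G hG =>
      MeasurableSet.iUnion fun j => (hmeas j) (hGm G hG)
  have hmap : ∀ j (E : Set (Fin d → ℝ)), MeasurableSet E → ℙ (z j ⁻¹' E) = μ E := by
    intro j E hE
    rw [← hlaw j, Measure.map_apply (hmeas j) hE]
  have h1 : ∀ j : ℕ, ℙ (z j ⁻¹' Z)ᶜ = 0 := by
    intro j
    rw [prob_compl_eq_zero_iff ((hmeas j) hZm), hmap j Z hZm]
    exact hμZ
  have h2 : ∀ G ∈ S, ℙ (⋃ j, z j ⁻¹' (f ⁻¹' G))ᶜ = 0 := by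
    intro G hG
    rw [prob_compl_eq_zero_iff (MeasurableSet.iUnion fun j => (hmeas j) (hGm G hG))]
    have hc : μ (f ⁻¹' G) ≠ 0 :=
      (hμG G (hSopen G hG) hG.2).ne'
    have hsm : ∀ j : ℕ, MeasurableSet (z j ⁻¹' (f ⁻¹' G)) := fun j => (hmeas j) (hGm G hG)
    have htop : (∑' j : ℕ, ℙ (z j ⁻¹' (f ⁻¹' G))) = ⊤ := by
      have : ∀ j : ℕ, ℙ (z j ⁻¹' (f ⁻¹' G)) = μ (f ⁻¹' G) := fun j => hmap j _ (hGm G hG)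
      simp only [this]
      exact ENNReal.tsum_const_eq_top_of_ne_zero hc
    have hBC := ProbabilityTheory.measure_limsup_eq_one hsm
      (iIndepSet_preimage ℙ z hindep (hGm G hG)) htop
    have hsub : Filter.limsup (fun j => z j ⁻¹' (f ⁻¹' G)) Filter.atTop ≤
        ⋃ j, z j ⁻¹' (f ⁻¹' G) := by
      rw [Filter.limsup_eq_iInf_iSup_of_nat]
      refine le_trans (iInf_le _ 0) ?_
      simp [iSup_le_iff, Set.subset_def]
    refine le_antisymm prob_le_one ?_
    calc (1 : ENNReal) = ℙ (Filter.limsup (fun j => z j ⁻¹' (f ⁻¹' G)) Filter.atTop) := hBC.symm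
      _ ≤ ℙ (⋃ j, z j ⁻¹' (f ⁻¹' G)) := measure_mono hsub
  have hA1 : ℙ A = 1 := by
    rw [← prob_compl_eq_zero_iff hAm]
    have hAc : Aᶜ = (⋃ j, (z j ⁻¹' Z)ᶜ) ∪ ⋃ G ∈ S, (⋃ j, z j ⁻¹' (f ⁻¹' G))ᶜ := by
      rw [hAdef, Set.compl_inter, Set.compl_iInter]
      congr 1
      simp [Set.compl_iInter]
    rw [hAc]
    exact measure_union_null (measure_iUnion_null h1) ((measure_biUnion_null_iff hScount).2 h2)
  refine ⟨A, hAm, hA1, ?_⟩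
  intro ω hω
  obtain ⟨hωZ, hωG⟩ := hω
  simp only [Set.mem_iInter] at hωZ
  have hωG' : ∀ G ∈ S, ∃ j, z j ω ∈ f ⁻¹' G := by
    intro G hG
    have := Set.mem_iInter₂.1 hωG G hG
    exact Set.mem_iUnion.1 this
  set s : ℕ → (Fin n → ℝ) := fun j => f (z j ω) with hsdef
  have hsX : ∀ j, s j ∈ X := by
    intro j
    rw [hX]
    exact ⟨z j ω, hωZ j, rfl⟩
  have hdense : X ⊆ closure (Set.range s) := by
    intro x hx
    rw [mem_closure_iff]
    intro o ho hxo
    obtain ⟨G, hGb, hxG, hGo⟩ :=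
      (TopologicalSpace.isBasis_countableBasis _).exists_subset_of_mem_open hxo ho
    obtain ⟨j, hj⟩ := hωG' G ⟨hGb, ⟨x, hxG, hx⟩⟩
    exact ⟨s j, hGo hj, Set.mem_range_self j⟩
  have hiU : (⋃ m : ℕ, convexHull ℝ (s '' Set.Iic m)) = convexHull ℝ (Set.range s) := by
    apply Subset.antisymm
    · exact iUnion_subset fun m => convexHull_mono (image_subset_range _ _)
    · intro x hx
      rw [convexHull_eq_union_convexHull_finite_subsets] at hx
      simp only [mem_iUnion] at hx
      obtain ⟨t, hts, hxt⟩ := hx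
      have hex : ∀ y ∈ t, ∃ j, s j = y := fun y hy => hts hy
      choose! j hj using hex
      refine mem_iUnion.2 ⟨t.sup j, convexHull_mono ?_ hxt⟩
      intro y hy
      have hy' : y ∈ t := hy
      exact ⟨j y, Set.mem_Iic.2 (Finset.le_sup hy'), hj y hy'⟩
  show closure (⋃ m : ℕ, convexHull ℝ (s '' Set.Iic m)) = convexHull ℝ X
  rw [hiU]
  apply Subset.antisymm
  · refine closure_minimal (convexHull_mono ?_) hconvclosed
    rintro _ ⟨j, rfl⟩
    exact hsX j
  · exact convexHull_min (hdense.trans (closure_mono (subset_convexHull ℝ _)))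
      ((convex_convexHull ℝ (Set.range s)).closure)
end

section
/- Let (Ω, 𝒜, ℙ) be a probability space and for each m ≥ 1 let 𝒳^m : Ω → Set(ℝ^n) be a random closed set (each 𝒳^m(ω) is closed and {ω : 𝒳^m(ω) ∩ K ≠ ∅} ∈ 𝒜 for every compact K ⊆ ℝ^n). Let X ⊆ ℝ^n be a deterministic closed set. Then the following are equivalent: (a) there is a measurable event of probability one on which the sequence 𝒳^m(ω) converges to X in the Fell sense, i.e., for every compact K ⊆ ℝ^n with X ∩ K = ∅ one has 𝒳^m(ω) ∩ K = ∅ for all sufficiently large m, and for every open G ⊆ ℝ^n with X ∩ G ≠ ∅ one has 𝒳^m(ω) ∩ G ≠ ∅ for all sufficiently large m; (b) both conditions hold: (C1) for every compact K ⊆ ℝ^n with X ∩ K = ∅, ℙ(𝒳^m ∩ K ≠ ∅ for infinitely many m) = 0, and (C2) for every open G ⊆ ℝ^n with X ∩ G ≠ ∅, ℙ(𝒳^m ∩ G = ∅ for infinitely many m) = 0. -/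
open MeasureTheory Set Filter Metric

private lemma measurableSet_infinite_aux {Ω : Type*} [MeasurableSpace Ω]
    (P : ℕ → Ω → Prop) (h : ∀ m, MeasurableSet {ω | P m ω}) :
    MeasurableSet {ω | {m | P m ω}.Infinite} := by
  have heq : {ω | {m | P m ω}.Infinite} = ⋂ N, ⋃ m, ⋃ _ : N ≤ m, {ω | P m ω} := by
    ext ω
    simp only [mem_iInter, mem_iUnion, mem_setOf_eq]
    rw [← Nat.frequently_atTop_iff_infinite, frequently_atTop]
    simp [ge_iff_le, exists_prop]
  rw [heq]
  exact MeasurableSet.iInter fun N => MeasurableSet.iUnion fun m =>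
    MeasurableSet.iUnion fun _ => h m

private lemma inter_ball_nonempty_iff {n : ℕ} (S : Set (Fin n → ℝ))
    (c : Fin n → ℝ) (r : ℝ) :
    (S ∩ ball c r).Nonempty ↔ ∃ k : ℕ, (S ∩ closedBall c (r - 1 / (k + 1))).Nonempty := by
  constructor
  · rintro ⟨y, hyS, hy⟩
    obtain ⟨k, hk⟩ := exists_nat_one_div_lt (sub_pos.2 (mem_ball.1 hy))
    exact ⟨k, y, hyS, mem_closedBall.2 (by linarith [mem_ball.1 hy])⟩
  · rintro ⟨k, y, hyS, hy⟩
    refine ⟨y, hyS, mem_ball.2 ?_⟩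
    have h1 : (0:ℝ) < 1 / (k + 1) := by positivity
    have := mem_closedBall.1 hy
    linarith

/-- Theorem 1 of the paper (Molchanov, Prop. 1.7.23): a sequence of random closed sets
in ℝⁿ almost surely converges in the Fell sense to a deterministic closed set `X`
iff conditions (C1) and (C2) hold. -/
theorem random_closed_sets_converge_iff_C1_C2
    {n : ℕ} {Ω : Type*} [MeasurableSpace Ω] (ℙ : Measure Ω) [IsProbabilityMeasure ℙ]
    (𝒳 : ℕ → Ω → Set (Fin n → ℝ))
    (hclosed : ∀ m ω, IsClosed (𝒳 m ω))
    (hmeas : ∀ (m : ℕ) (K : Set (Fin n → ℝ)), IsCompact K →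
      MeasurableSet {ω | (𝒳 m ω ∩ K).Nonempty})
    (X : Set (Fin n → ℝ)) (hX : IsClosed X) :
    (∃ A : Set Ω, MeasurableSet A ∧ ℙ A = 1 ∧
        ∀ ω ∈ A,
          (∀ K : Set (Fin n → ℝ), IsCompact K → X ∩ K = ∅ →
            ∀ᶠ m in atTop, 𝒳 m ω ∩ K = ∅) ∧
          (∀ G : Set (Fin n → ℝ), IsOpen G → (X ∩ G).Nonempty →
            ∀ᶠ m in atTop, (𝒳 m ω ∩ G).Nonempty))
    ↔
    ((∀ K : Set (Fin n → ℝ), IsCompact K → X ∩ K = ∅ →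
        ℙ {ω | {m : ℕ | (𝒳 m ω ∩ K).Nonempty}.Infinite} = 0) ∧
     (∀ G : Set (Fin n → ℝ), IsOpen G → (X ∩ G).Nonempty →
        ℙ {ω | {m : ℕ | 𝒳 m ω ∩ G = ∅}.Infinite} = 0)) := by
  classical
  constructor
  · rintro ⟨A, hA, hA1, hAc⟩
    have hAc0 : ℙ Aᶜ = 0 := by
      rw [measure_compl hA (measure_ne_top _ _), hA1, measure_univ]; simp
    constructor
    · intro K hK hXK
      refine measure_mono_null (fun ω hω => ?_) hAc0
      by_contra hωA
      rw [mem_compl_iff, not_not] at hωA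
      have hev := (hAc ω hωA).1 K hK hXK
      have hfr : ∃ᶠ m in atTop, (𝒳 m ω ∩ K).Nonempty :=
        Nat.frequently_atTop_iff_infinite.mpr hω
      obtain ⟨m, hm1, hm2⟩ := (hfr.and_eventually hev).exists
      exact (nonempty_iff_ne_empty.1 hm1) hm2
    · intro G hG hXG
      refine measure_mono_null (fun ω hω => ?_) hAc0
      by_contra hωA
      rw [mem_compl_iff, not_not] at hωA
      have hev := (hAc ω hωA).2 G hG hXG
      have hfr : ∃ᶠ m in atTop, 𝒳 m ω ∩ G = ∅ :=
        Nat.frequently_atTop_iff_infinite.mpr hω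
      obtain ⟨m, hm1, hm2⟩ := (hfr.and_eventually hev).exists
      exact (nonempty_iff_ne_empty.1 hm2) hm1
  · rintro ⟨hC1, hC2⟩
    obtain ⟨D, hDc, hDd⟩ := TopologicalSpace.exists_countable_dense (Fin n → ℝ)
    haveI : Countable D := hDc.to_subtype
    haveI : Nonempty ↑D := hDd.nonempty.to_subtype
    set badK : D × ℚ → Set Ω := fun p =>
      {ω | X ∩ closedBall (p.1 : Fin n → ℝ) (p.2 : ℝ) = ∅ ∧
        {m : ℕ | (𝒳 m ω ∩ closedBall (p.1 : Fin n → ℝ) (p.2 : ℝ)).Nonempty}.Infinite}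
      with hbadK
    set badG : D × ℚ → Set Ω := fun p =>
      {ω | (X ∩ ball (p.1 : Fin n → ℝ) (p.2 : ℝ)).Nonempty ∧
        {m : ℕ | 𝒳 m ω ∩ ball (p.1 : Fin n → ℝ) (p.2 : ℝ) = ∅}.Infinite}
      with hbadG
    have hmeasK : ∀ p, MeasurableSet (badK p) := by
      intro p
      by_cases hC : X ∩ closedBall (p.1 : Fin n → ℝ) (p.2 : ℝ) = ∅
      · have : badK p = {ω | {m : ℕ |
            (𝒳 m ω ∩ closedBall (p.1 : Fin n → ℝ) (p.2 : ℝ)).Nonempty}.Infinite} := by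
          ext ω; simp [hbadK, hC]
        rw [this]
        exact measurableSet_infinite_aux _ fun m => hmeas m _ (isCompact_closedBall _ _)
      · have : badK p = ∅ := by ext ω; simp [hbadK, hC]
        rw [this]; exact MeasurableSet.empty
    have hmeasBall : ∀ (m : ℕ) (c : Fin n → ℝ) (r : ℝ),
        MeasurableSet {ω | (𝒳 m ω ∩ ball c r).Nonempty} := by
      intro m c r
      have : {ω | (𝒳 m ω ∩ ball c r).Nonempty}
          = ⋃ k : ℕ, {ω | (𝒳 m ω ∩ closedBall c (r - 1 / (k + 1))).Nonempty} := by
        ext ω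
        simp only [mem_iUnion, mem_setOf_eq]
        exact inter_ball_nonempty_iff _ _ _
      rw [this]
      exact MeasurableSet.iUnion fun k => hmeas m _ (isCompact_closedBall _ _)
    have hmeasG : ∀ p, MeasurableSet (badG p) := by
      intro p
      by_cases hC : (X ∩ ball (p.1 : Fin n → ℝ) (p.2 : ℝ)).Nonempty
      · have heq : badG p = {ω | {m : ℕ |
            𝒳 m ω ∩ ball (p.1 : Fin n → ℝ) (p.2 : ℝ) = ∅}.Infinite} := by
          ext ω; simp [hbadG, hC]
        rw [heq]
        refine measurableSet_infinite_aux _ fun m => ?_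
        have := (hmeasBall m (p.1 : Fin n → ℝ) (p.2 : ℝ)).compl
        convert this using 1
        ext ω
        simp [nonempty_iff_ne_empty]
      · have : badG p = ∅ := by ext ω; simp [hbadG, hC]
        rw [this]; exact MeasurableSet.empty
    have hnullK : ∀ p, ℙ (badK p) = 0 := by
      intro p
      by_cases hC : X ∩ closedBall (p.1 : Fin n → ℝ) (p.2 : ℝ) = ∅
      · refine measure_mono_null (fun ω hω => hω.2) (hC1 _ (isCompact_closedBall _ _) hC)
      · have : badK p = ∅ := by ext ω; simp [hbadK, hC]
        rw [this]; exact measure_empty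
    have hnullG : ∀ p, ℙ (badG p) = 0 := by
      intro p
      by_cases hC : (X ∩ ball (p.1 : Fin n → ℝ) (p.2 : ℝ)).Nonempty
      · exact measure_mono_null (fun ω hω => hω.2) (hC2 _ isOpen_ball hC)
      · have : badG p = ∅ := by ext ω; simp [hbadG, hC]
        rw [this]; exact measure_empty
    refine ⟨((⋃ p, badK p) ∪ ⋃ p, badG p)ᶜ, ?_, ?_, ?_⟩
    · exact ((MeasurableSet.iUnion hmeasK).union (MeasurableSet.iUnion hmeasG)).compl
    · rw [measure_compl ((MeasurableSet.iUnion hmeasK).union (MeasurableSet.iUnion hmeasG))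
        (measure_ne_top _ _), measure_univ]
      have : ℙ ((⋃ p, badK p) ∪ ⋃ p, badG p) = 0 :=
        measure_union_null (measure_iUnion_null hnullK) (measure_iUnion_null hnullG)
      rw [this]; simp
    · intro ω hω
      simp only [mem_compl_iff, mem_union, mem_iUnion, not_or, not_exists] at hω
      obtain ⟨hωK, hωG⟩ := hω
      constructor
      · -- compact part
        intro K hK hXK
        have hcover : ∀ x ∈ K, ∃ p : D × ℚ,
            X ∩ closedBall (p.1 : Fin n → ℝ) (p.2 : ℝ) = ∅ ∧
            x ∈ ball (p.1 : Fin n → ℝ) (p.2 : ℝ) := by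
          intro x hx
          have hxX : x ∉ X := fun hxX => by
            have : x ∈ X ∩ K := ⟨hxX, hx⟩
            rw [hXK] at this; exact this
          obtain ⟨ε, hε, hball⟩ := Metric.isOpen_iff.1 hX.isOpen_compl x hxX
          obtain ⟨c, hcD, hcx⟩ := Metric.mem_closure_iff.1 (hDd x) (ε / 4) (by linarith)
          obtain ⟨r, hr1, hr2⟩ := exists_rat_btwn (show ε / 4 < ε / 2 by linarith)
          refine ⟨⟨⟨c, hcD⟩, r⟩, ?_, ?_⟩
          · rw [eq_empty_iff_forall_notMem]
            rintro y ⟨hyX, hyB⟩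
            have : y ∈ ball x ε := by
              rw [mem_ball]
              have h1 := mem_closedBall.1 hyB
              have h2 : dist y x ≤ dist y c + dist c x := dist_triangle y c x
              rw [dist_comm x c] at hcx
              linarith
            exact hball this hyX
          · rw [mem_ball]
            rw [dist_comm] at hcx ⊢
            exact lt_trans hcx hr1
        choose! p hp1 hp2 using hcover
        have hKopen : K ⊆ ⋃ x ∈ K, ball ((p x).1 : Fin n → ℝ) ((p x).2 : ℝ) :=
          fun x hx => mem_biUnion hx (hp2 x hx)
        obtain ⟨t, htK, htfin, htcov⟩ := hK.elim_finite_subcover_image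
          (fun x _ => isOpen_ball) hKopen
        have hev : ∀ x ∈ t, ∀ᶠ m in atTop,
            𝒳 m ω ∩ closedBall ((p x).1 : Fin n → ℝ) ((p x).2 : ℝ) = ∅ := by
          intro x hxt
          have hb := hωK (p x)
          simp only [hbadK, mem_setOf_eq, not_and] at hb
          have hfin := Set.not_infinite.mp (hb (hp1 x (htK hxt)))
          obtain ⟨N, hN⟩ := hfin.bddAbove
          filter_upwards [eventually_gt_atTop N] with m hm
          by_contra hne
          have hmem : m ∈ {m : ℕ |
              (𝒳 m ω ∩ closedBall ((p x).1 : Fin n → ℝ) ((p x).2 : ℝ)).Nonempty} :=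
            nonempty_iff_ne_empty.2 hne
          exact absurd (hN hmem) (not_le.2 hm)
        have hev2 : ∀ᶠ m in atTop, ∀ x ∈ t,
            𝒳 m ω ∩ closedBall ((p x).1 : Fin n → ℝ) ((p x).2 : ℝ) = ∅ :=
          (eventually_all_finite htfin).2 hev
        filter_upwards [hev2] with m hm
        rw [eq_empty_iff_forall_notMem]
        rintro y ⟨hy𝒳, hyK⟩
        obtain ⟨x, hxt, hxy⟩ : ∃ x ∈ t, y ∈ ball ((p x).1 : Fin n → ℝ) ((p x).2 : ℝ) := by
          have := htcov hyK
          simpa using this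
        have hmem : y ∈ 𝒳 m ω ∩ closedBall ((p x).1 : Fin n → ℝ) ((p x).2 : ℝ) :=
          ⟨hy𝒳, ball_subset_closedBall hxy⟩
        rw [hm x hxt] at hmem
        exact hmem
      · -- open part
        intro G hG hXG
        obtain ⟨x, hxX, hxG⟩ := hXG
        obtain ⟨ε, hε, hball⟩ := Metric.isOpen_iff.1 hG x hxG
        obtain ⟨c, hcD, hcx⟩ := Metric.mem_closure_iff.1 (hDd x) (ε / 3) (by linarith)
        obtain ⟨r, hr1, hr2⟩ := exists_rat_btwn (show ε / 3 < ε / 2 by linarith)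
        have hsub : ball c (r : ℝ) ⊆ G := by
          intro y hy
          apply hball
          rw [mem_ball] at hy ⊢
          have := dist_triangle y c x
          rw [dist_comm x c] at hcx
          linarith
        have hxball : x ∈ ball c (r : ℝ) := by
          rw [mem_ball, dist_comm]
          rw [dist_comm] at hcx
          exact lt_trans hcx hr1
        have hb := hωG ⟨⟨c, hcD⟩, r⟩
        simp only [hbadG, mem_setOf_eq, not_and] at hb
        have hfin := Set.not_infinite.mp (hb ⟨x, hxX, hxball⟩)
        obtain ⟨N, hN⟩ := hfin.bddAbove
        filter_upwards [eventually_gt_atTop N] with m hm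
        by_contra hne
        rw [not_nonempty_iff_eq_empty] at hne
        have hmem : m ∈ {m : ℕ | 𝒳 m ω ∩ ball c (r : ℝ) = ∅} := by
          rw [mem_setOf_eq, eq_empty_iff_forall_notMem]
          rintro y ⟨hy1, hy2⟩
          have : y ∈ 𝒳 m ω ∩ G := ⟨hy1, hsub hy2⟩
          rw [hne] at this; exact this
        exact absurd (hN hmem) (not_le.2 hm)
end

section
/- Let Q ∈ ℝ^{n×n} be symmetric positive definite and μ, x ∈ ℝ^n with (x − μ)ᵀ Q⁻¹ (x − μ) ≤ 1. Let h(y) = A y + b with A ∈ ℝ^{n×n} invertible and b ∈ ℝ^n, and let g : ℝ^n → ℝ^n satisfy the componentwise Lipschitz bounds |g_i(y) − g_i(y')| ≤ L_i ‖y − y'‖₂ for all y, y' ∈ ℝ^n, with L_i > 0 for every i. Define Q_nom := A Q Aᵀ, Q_g := n · diag(L₁² λ_max(Q), …, L_n² λ_max(Q)) where λ_max(Q) is the largest eigenvalue of Q, c := √(Tr(Q_nom)/Tr(Q_g)), and Q⁺ := ((c+1)/c)·Q_nom + (1+c)·Q_g. Then h(x) + g(x) ∈ B(h(μ) + g(μ),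 Q⁺), i.e., (h(x)+g(x) − h(μ) − g(μ))ᵀ (Q⁺)⁻¹ (h(x)+g(x) − h(μ) − g(μ)) ≤ 1. -/
open Matrix


lemma real_dot_symm {n : ℕ} {M : Matrix (Fin n) (Fin n) ℝ} (hM : M.IsHermitian)
    (x y : Fin n → ℝ) : x ⬝ᵥ M *ᵥ y = y ⬝ᵥ M *ᵥ x := by
  have hMt : Mᵀ = M := by
    have := hM.eq
    rwa [conjTranspose_eq_transpose_of_trivial] at this
  rw [dotProduct_mulVec, ← mulVec_transpose, hMt, dotProduct_comm]

lemma real_dot_self_nonneg {n : ℕ} (x : Fin n → ℝ) : 0 ≤ x ⬝ᵥ x :=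
  Finset.sum_nonneg fun i _ => mul_self_nonneg (x i)

lemma psd_cauchy_schwarz {n : ℕ} {M : Matrix (Fin n) (Fin n) ℝ} (hM : M.PosSemidef)
    (x y : Fin n → ℝ) :
    (x ⬝ᵥ M *ᵥ y) ^ 2 ≤ (x ⬝ᵥ M *ᵥ x) * (y ⬝ᵥ M *ᵥ y) := by
  have key : ∀ t : ℝ, 0 ≤ (y ⬝ᵥ M *ᵥ y) * (t * t) + (2 * (x ⬝ᵥ M *ᵥ y)) * t + (x ⬝ᵥ M *ᵥ x) := by
    intro t
    have h0 := hM.dotProduct_mulVec_nonneg (x + t • y)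
    simp only [star_trivial] at h0
    have hsym := real_dot_symm hM.1 x y
    have hexp : (x + t • y) ⬝ᵥ M *ᵥ (x + t • y)
        = (y ⬝ᵥ M *ᵥ y) * (t * t) + (2 * (x ⬝ᵥ M *ᵥ y)) * t + (x ⬝ᵥ M *ᵥ x) := by
      simp only [mulVec_add, mulVec_smul, dotProduct_add, add_dotProduct,
        smul_dotProduct, dotProduct_smul, smul_eq_mul]
      linear_combination (-t) * hsym
    linarith [hexp ▸ h0]
  have hd := discrim_le_zero key
  rw [discrim] at hd
  nlinarith [hd]

lemma ellipsoid_support {n : ℕ} {M : Matrix (Fin n) (Fin n) ℝ} (hM : M.PosDef)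
    {u : Fin n → ℝ} (hu : u ⬝ᵥ M⁻¹ *ᵥ u ≤ 1) (z : Fin n → ℝ) :
    (u ⬝ᵥ z) ^ 2 ≤ z ⬝ᵥ M *ᵥ z := by
  have hdet : IsUnit M.det := hM.det_pos.ne'.isUnit
  have hCS := psd_cauchy_schwarz hM.inv.posSemidef u (M *ᵥ z)
  have h1 : M⁻¹ *ᵥ (M *ᵥ z) = z := by
    rw [mulVec_mulVec, nonsing_inv_mul M hdet, one_mulVec]
  rw [h1] at hCS
  have h2 : (M *ᵥ z) ⬝ᵥ z = z ⬝ᵥ M *ᵥ z := dotProduct_comm _ _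
  rw [h2] at hCS
  have h3 : 0 ≤ z ⬝ᵥ M *ᵥ z := by simpa using hM.posSemidef.dotProduct_mulVec_nonneg z
  nlinarith

lemma ellipsoid_mem_of_support {n : ℕ} {M : Matrix (Fin n) (Fin n) ℝ} (hM : M.PosDef)
    {u : Fin n → ℝ} (hu : ∀ z, (u ⬝ᵥ z) ^ 2 ≤ z ⬝ᵥ M *ᵥ z) :
    u ⬝ᵥ M⁻¹ *ᵥ u ≤ 1 := by
  have hdet : IsUnit M.det := hM.det_pos.ne'.isUnit
  have h0 := hu (M⁻¹ *ᵥ u)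
  have h1 : M *ᵥ (M⁻¹ *ᵥ u) = u := by
    rw [mulVec_mulVec, mul_nonsing_inv M hdet, one_mulVec]
  rw [h1] at h0
  have h2 : (M⁻¹ *ᵥ u) ⬝ᵥ u = u ⬝ᵥ M⁻¹ *ᵥ u := dotProduct_comm _ _
  rw [h2] at h0
  have h3 : 0 ≤ u ⬝ᵥ M⁻¹ *ᵥ u := by simpa using hM.inv.posSemidef.dotProduct_mulVec_nonneg u
  nlinarith

lemma rayleigh_upper {n : ℕ} {Q : Matrix (Fin n) (Fin n) ℝ} (hH : Q.IsHermitian)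
    {lmax : ℝ} (hub : ∀ i, hH.eigenvalues i ≤ lmax) (z : Fin n → ℝ) :
    z ⬝ᵥ Q *ᵥ z ≤ lmax * (z ⬝ᵥ z) := by
  set U : Matrix (Fin n) (Fin n) ℝ := (hH.eigenvectorUnitary : Matrix (Fin n) (Fin n) ℝ) with hU
  have hUU : U * star U = 1 := Unitary.coe_mul_star_self _
  have hUU' : star U * U = 1 := Unitary.coe_star_mul_self _
  set w : Fin n → ℝ := star U *ᵥ z with hw
  have hQz : z ⬝ᵥ Q *ᵥ z = ∑ i, hH.eigenvalues i * (w i)^2 := by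
    conv_lhs => rw [hH.spectral_theorem, Unitary.conjStarAlgAut_apply]
    rw [← mulVec_mulVec, ← mulVec_mulVec]
    have hUz : z ⬝ᵥ U *ᵥ (diagonal (RCLike.ofReal ∘ hH.eigenvalues) *ᵥ w) =
        w ⬝ᵥ (diagonal (RCLike.ofReal ∘ hH.eigenvalues) *ᵥ w) := by
      rw [dotProduct_mulVec]
      congr 1
      rw [hw, star_eq_conjTranspose, conjTranspose_eq_transpose_of_trivial, mulVec_transpose]
    rw [hUz]
    simp only [dotProduct, mulVec_diagonal, Function.comp_apply, RCLike.ofReal_real_eq_id, id_eq]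
    exact Finset.sum_congr rfl fun i _ => by ring
  have hstar : star U = Uᵀ := by
    rw [star_eq_conjTranspose, conjTranspose_eq_transpose_of_trivial]
  have hT : U * Uᵀ = 1 := by rw [← hstar]; exact hUU
  have key : z ⬝ᵥ (U * Uᵀ) *ᵥ z = (Uᵀ *ᵥ z) ⬝ᵥ (Uᵀ *ᵥ z) := by
    rw [← mulVec_mulVec, dotProduct_mulVec, ← mulVec_transpose]
  have hzz : w ⬝ᵥ w = z ⬝ᵥ z := by
    rw [hw, hstar, ← key, hT, one_mulVec]
  rw [hQz, ← hzz]
  have : lmax * (w ⬝ᵥ w) = ∑ i, lmax * (w i)^2 := by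
    simp only [dotProduct, Finset.mul_sum]
    exact Finset.sum_congr rfl fun i _ => by ring
  rw [this]
  exact Finset.sum_le_sum fun i _ => by nlinarith [sq_nonneg (w i), hub i]

lemma conj_dot {n : ℕ} (A M : Matrix (Fin n) (Fin n) ℝ) (z : Fin n → ℝ) :
    (A *ᵥ z) ⬝ᵥ M *ᵥ (A *ᵥ z) = z ⬝ᵥ (Aᵀ * M * A) *ᵥ z := by
  conv_rhs => rw [← mulVec_mulVec, ← mulVec_mulVec, dotProduct_mulVec, vecMul_transpose]

lemma posDef_conj {n : ℕ} {Q A : Matrix (Fin n) (Fin n) ℝ} (hQ : Q.PosDef)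
    (hA : IsUnit A.det) : (A * Q * Aᵀ).PosDef := by
  have hAt : IsUnit Aᵀ := (isUnit_iff_isUnit_det _).2 (by rwa [det_transpose])
  refine PosDef.of_dotProduct_mulVec_pos ?_ (fun x hx => ?_)
  · have h1 := (hQ.posSemidef.mul_mul_conjTranspose_same A).1
    rwa [conjTranspose_eq_transpose_of_trivial] at h1
  · have hxA : Aᵀ *ᵥ x ≠ 0 := by
      intro h0
      have hinj : Function.Injective (Aᵀ).mulVec := mulVec_injective_iff_isUnit.mpr hAt
      exact hx (hinj (by rw [h0, mulVec_zero]))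
    have hpos := hQ.dotProduct_mulVec_pos hxA
    have hkey := conj_dot Aᵀ Q x
    rw [transpose_transpose] at hkey
    simp only [star_trivial] at hpos ⊢
    rw [← hkey]
    exact hpos

lemma posDef_smul {n : ℕ} {M : Matrix (Fin n) (Fin n) ℝ} (hM : M.PosDef) {r : ℝ}
    (hr : 0 < r) : (r • M).PosDef := by
  refine PosDef.of_dotProduct_mulVec_pos ?_ (fun x hx => ?_)
  · show (r • M)ᴴ = r • M
    rw [conjTranspose_smul, hM.1.eq, star_trivial]
  · rw [smul_mulVec, dotProduct_smul, smul_eq_mul]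
    exact mul_pos hr (by simpa using hM.dotProduct_mulVec_pos hx)

lemma posdef_trace_pos {n : ℕ} (hn : 0 < n) {M : Matrix (Fin n) (Fin n) ℝ}
    (hM : M.PosDef) : 0 < M.trace := by
  have hdiag : ∀ i, 0 < M i i := by
    intro i
    have h := hM.dotProduct_mulVec_pos (x := Pi.single i 1) (by simp [Pi.single_eq_same, Function.ne_iff])
    simpa [dotProduct, mulVec, Pi.single_apply, Finset.sum_ite_eq] using h
  rw [trace]
  exact Finset.sum_pos (fun i _ => hdiag i) ⟨⟨0, hn⟩, Finset.mem_univ _⟩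


/-- Soundness of one step of the Lipschitz-based ellipsoidal propagation of
Koller et al. (as implemented in the paper's Appendix): if `x ∈ B(μ, Q)`,
`h` is affine and `g` is componentwise Lipschitz, then
`h(x) + g(x) ∈ B(h(μ) + g(μ), Q⁺)`. -/
theorem lipschitz_ellipsoidal_propagation_sound
    {n : ℕ} (Q : Matrix (Fin n) (Fin n) ℝ) (hQ : Q.PosDef)
    (μ x : Fin n → ℝ)
    (hx : (x - μ) ⬝ᵥ Q⁻¹ *ᵥ (x - μ) ≤ 1)
    (A : Matrix (Fin n) (Fin n) ℝ) (hA : IsUnit A.det) (b : Fin n → ℝ)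
    (h : (Fin n → ℝ) → (Fin n → ℝ)) (hh : ∀ y, h y = A *ᵥ y + b)
    (g : (Fin n → ℝ) → (Fin n → ℝ))
    (L : Fin n → ℝ) (hL : ∀ i, 0 < L i)
    (hg : ∀ y y' i, |g y i - g y' i| ≤ L i * Real.sqrt ((y - y') ⬝ᵥ (y - y')))
    (lmax : ℝ) (hlmax : IsGreatest (Set.range hQ.1.eigenvalues) lmax)
    (Qnom Qg Qplus : Matrix (Fin n) (Fin n) ℝ) (c : ℝ)
    (hQnom : Qnom = A * Q * Aᵀ)
    (hQg : Qg = (n : ℝ) • Matrix.diagonal (fun i => (L i) ^ 2 * lmax))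
    (hc : c = Real.sqrt (Qnom.trace / Qg.trace))
    (hQplus : Qplus = ((c + 1) / c) • Qnom + (1 + c) • Qg) :
    (h x + g x - h μ - g μ) ⬝ᵥ Qplus⁻¹ *ᵥ (h x + g x - h μ - g μ) ≤ 1 := by
  rcases Nat.eq_zero_or_pos n with hn | hn
  · subst hn
    simp [dotProduct]
  haveI : Nonempty (Fin n) := ⟨⟨0, hn⟩⟩
  have hnpos : (0:ℝ) < (n:ℝ) := by exact_mod_cast hn
  set z := x - μ with hzdef
  -- eigenvalue facts
  have hub : ∀ i, hQ.1.eigenvalues i ≤ lmax := fun i => hlmax.2 ⟨i, rfl⟩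
  have hlmax_pos : 0 < lmax := by
    obtain ⟨i, hi⟩ := hlmax.1
    exact hi ▸ hQ.eigenvalues_pos i
  have hQdet : IsUnit Q.det := hQ.det_pos.ne'.isUnit
  -- ‖z‖² ≤ lmax
  have hzz_le : z ⬝ᵥ z ≤ lmax := by
    have hCS := psd_cauchy_schwarz hQ.inv.posSemidef z (Q *ᵥ z)
    rw [mulVec_mulVec, nonsing_inv_mul Q hQdet, one_mulVec] at hCS
    rw [dotProduct_comm (Q *ᵥ z) z] at hCS
    have hray := rayleigh_upper hQ.1 hub z
    have h0 : 0 ≤ z ⬝ᵥ z := real_dot_self_nonneg z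
    have h1 : 0 ≤ z ⬝ᵥ Q *ᵥ z := by simpa using hQ.posSemidef.dotProduct_mulVec_nonneg z
    have h2 : 0 ≤ z ⬝ᵥ Q⁻¹ *ᵥ z := by simpa using hQ.inv.posSemidef.dotProduct_mulVec_nonneg z
    nlinarith [hx, hCS, hray]
  -- nominal part
  have hQnomPD : Qnom.PosDef := hQnom ▸ posDef_conj hQ hA
  have hAtdet : IsUnit Aᵀ.det := by rwa [det_transpose]
  set a := A *ᵥ z with ha
  have haQ : a ⬝ᵥ Qnom⁻¹ *ᵥ a ≤ 1 := by
    have hkey := conj_dot A Qnom⁻¹ z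
    have heq : Aᵀ * Qnom⁻¹ * A = Q⁻¹ := by
      rw [hQnom, Matrix.mul_inv_rev, Matrix.mul_inv_rev]
      simp only [Matrix.mul_assoc]
      rw [nonsing_inv_mul A hA, Matrix.mul_one, ← Matrix.mul_assoc,
        mul_nonsing_inv Aᵀ hAtdet, Matrix.one_mul]
    rw [heq] at hkey
    rw [ha, hkey]
    exact hx
  -- Lipschitz part
  set v : Fin n → ℝ := fun i => g x i - g μ i with hv
  have hvb : ∀ i, (v i) ^ 2 ≤ (L i) ^ 2 * lmax := by
    intro i
    have h1 := hg x μ i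
    rw [← hzdef] at h1
    have h2 : Real.sqrt (z ⬝ᵥ z) ^ 2 = z ⬝ᵥ z := Real.sq_sqrt (real_dot_self_nonneg z)
    have h3 : |v i| ≤ L i * Real.sqrt (z ⬝ᵥ z) := h1
    have h4 : 0 ≤ Real.sqrt (z ⬝ᵥ z) := Real.sqrt_nonneg _
    nlinarith [abs_nonneg (v i), sq_abs (v i), sq_nonneg (L i), (hL i).le, hzz_le,
      mul_le_mul h3 h3 (abs_nonneg (v i)) (mul_nonneg (hL i).le h4)]
  have hQg' : Qg = diagonal (fun i => (n:ℝ) * ((L i) ^ 2 * lmax)) := by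
    rw [hQg, ← diagonal_smul]
    congr 1
  have hQgPD : Qg.PosDef := by
    rw [hQg']
    exact PosDef.diagonal fun i => mul_pos hnpos (mul_pos (pow_pos (hL i) 2) hlmax_pos)
  have hvQg : v ⬝ᵥ Qg⁻¹ *ᵥ v ≤ 1 := by
    have hinv : Qg⁻¹ = diagonal (fun i => ((n:ℝ) * ((L i) ^ 2 * lmax))⁻¹) := by
      apply inv_eq_right_inv
      rw [hQg', diagonal_mul_diagonal]
      ext i j
      rcases eq_or_ne i j with rfl | hij
      · simp only [Matrix.diagonal_apply_eq, Pi.mul_apply, Matrix.one_apply_eq]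
        exact mul_inv_cancel₀ (ne_of_gt (mul_pos hnpos (mul_pos (pow_pos (hL i) 2) hlmax_pos)))
      · simp [Matrix.one_apply, hij]
    rw [hinv]
    have hsum : v ⬝ᵥ diagonal (fun i => ((n:ℝ) * ((L i) ^ 2 * lmax))⁻¹) *ᵥ v
        = ∑ i, v i * (((n:ℝ) * ((L i) ^ 2 * lmax))⁻¹ * v i) := by
      simp [dotProduct, mulVec_diagonal]
    rw [hsum]
    have hterm : ∀ i, v i * (((n:ℝ) * ((L i) ^ 2 * lmax))⁻¹ * v i) ≤ 1 / (n:ℝ) := by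
      intro i
      have hd : 0 < (n:ℝ) * ((L i) ^ 2 * lmax) :=
        mul_pos hnpos (mul_pos (pow_pos (hL i) 2) hlmax_pos)
      rw [show v i * (((n:ℝ) * ((L i) ^ 2 * lmax))⁻¹ * v i)
          = (v i) ^ 2 / ((n:ℝ) * ((L i) ^ 2 * lmax)) by ring]
      rw [div_le_div_iff₀ hd hnpos]
      have := hvb i
      nlinarith
    calc ∑ i, v i * (((n:ℝ) * ((L i) ^ 2 * lmax))⁻¹ * v i)
        ≤ ∑ _i : Fin n, 1 / (n:ℝ) := Finset.sum_le_sum fun i _ => hterm i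
      _ = 1 := by
          rw [Finset.sum_const, Finset.card_univ, Fintype.card_fin, nsmul_eq_mul]
          field_simp
  -- positivity of c and Qplus
  have hcpos : 0 < c := by
    rw [hc]
    exact Real.sqrt_pos.mpr (div_pos (posdef_trace_pos hn hQnomPD) (posdef_trace_pos hn hQgPD))
  have hQplusPD : Qplus.PosDef := by
    rw [hQplus]
    exact (posDef_smul hQnomPD (by positivity)).add (posDef_smul hQgPD (by positivity))
  -- decompose the displacement
  have hd : h x + g x - h μ - g μ = a + v := by
    funext i
    simp only [hh, ha, hzdef, mulVec_sub, Pi.add_apply, Pi.sub_apply, hv]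
    ring
  rw [hd]
  apply ellipsoid_mem_of_support hQplusPD
  intro zz
  have hs1 : (a ⬝ᵥ zz) ^ 2 ≤ zz ⬝ᵥ Qnom *ᵥ zz := ellipsoid_support hQnomPD haQ zz
  have hs2 : (v ⬝ᵥ zz) ^ 2 ≤ zz ⬝ᵥ Qg *ᵥ zz := ellipsoid_support hQgPD hvQg zz
  have hr : zz ⬝ᵥ Qplus *ᵥ zz
      = ((c + 1) / c) * (zz ⬝ᵥ Qnom *ᵥ zz) + (1 + c) * (zz ⬝ᵥ Qg *ᵥ zz) := by
    rw [hQplus, add_mulVec, dotProduct_add, smul_mulVec, smul_mulVec,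
      dotProduct_smul, dotProduct_smul, smul_eq_mul, smul_eq_mul]
  rw [add_dotProduct, hr]
  have hck : c * ((c + 1) / c) = c + 1 := by field_simp
  nlinarith [hs1, hs2, hcpos, hck, sq_nonneg (a ⬝ᵥ zz - c * (v ⬝ᵥ zz)),
    mul_pos hcpos hcpos, mul_le_mul_of_nonneg_left hs1 hcpos.le,
    mul_le_mul_of_nonneg_left hs2 (mul_pos hcpos hcpos).le]
end
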